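/- Let S be a totally ordered idempotent semifield and w ∈ ⋀^d V a tropical Plücker vector. Then the natural map ⋀^{d−1} Q_w → Q_w^∨ = L_w, induced by the pairing ⋀^{d−1}Q_w × ⋀^1 Q_w → ⋀^d Q_w ≅ S, is surjective. Concretely, the image of x_I (I ∈ C([n],d−1)) is the vector Σ_j (w_{I+j}/w_K) e_j ∈ V, a scalar multiple of the cocircuit vector β_I, where x_K is a fixed generator of ⋀^d Q_w ≅ S with w_K ≠ 0. -/

import Mathlib

open Finset

section Helpers
variable {S : Type*} [Semifield S] [LinearOrder S]

theorem my_zero_le (hord : ∀ a b : S, a ≤ b ↔ a + b = b) (s : S) : 0 ≤ s :=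
  (hord 0 s).2 (zero_add s)

theorem my_le_add_left (hid : ∀ s : S, s + s = s)
    (hord : ∀ a b : S, a ≤ b ↔ a + b = b) (a b : S) : a ≤ a + b :=
  (hord a (a + b)).2 (by rw [← add_assoc, hid])

theorem my_add_le (hord : ∀ a b : S, a ≤ b ↔ a + b = b) {a b c : S}
    (h1 : a ≤ c) (h2 : b ≤ c) : a + b ≤ c := by
  rw [hord] at h1 h2 ⊢
  rw [add_assoc, h2, h1]

theorem my_mul_le_mul_right (hord : ∀ a b : S, a ≤ b ↔ a + b = b) {a b : S}
    (h : a ≤ b) (c : S) : a * c ≤ b * c := by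
  rw [hord] at h ⊢
  rw [← add_mul, h]

theorem my_sum_le (hord : ∀ a b : S, a ≤ b ↔ a + b = b) {ι : Type*}
    {T : Finset ι} {f : ι → S} {c : S} (h : ∀ i ∈ T, f i ≤ c) :
    ∑ i ∈ T, f i ≤ c := by
  classical
  induction T using Finset.induction with
  | empty => simpa using my_zero_le hord c
  | insert _ _ hnot ih =>
    rw [Finset.sum_insert hnot]
    exact my_add_le hord (h _ (mem_insert_self _ _))
      (ih fun i hi => h i (mem_insert_of_mem hi))

theorem my_single_le_sum (hid : ∀ s : S, s + s = s)
    (hord : ∀ a b : S, a ≤ b ↔ a + b = b) {ι : Type*} [DecidableEq ι]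
    {T : Finset ι} {f : ι → S} {i : ι} (h : i ∈ T) :
    f i ≤ ∑ t ∈ T, f t := by
  rw [← Finset.add_sum_erase _ _ h]
  exact my_le_add_left hid hord _ _

theorem my_le_or_le (hord : ∀ a b : S, a ≤ b ↔ a + b = b) {a b c : S}
    (h : a ≤ b + c) : a ≤ b ∨ a ≤ c := by
  rcases le_total b c with hbc | hcb
  · right; exact h.trans_eq ((hord b c).1 hbc)
  · left; exact h.trans_eq (by rw [add_comm]; exact (hord c b).1 hcb)

theorem my_exists_le_of_le_sum (hord : ∀ a b : S, a ≤ b ↔ a + b = b) {ι : Type*}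
    {T : Finset ι} {f : ι → S} {a : S} (ha : a ≠ 0) (h : a ≤ ∑ i ∈ T, f i) :
    ∃ i ∈ T, a ≤ f i := by
  classical
  induction T using Finset.induction with
  | empty =>
    simp only [Finset.sum_empty] at h
    exact absurd (le_antisymm h (my_zero_le hord a)) ha
  | insert _ _ hnot ih =>
    rw [Finset.sum_insert hnot] at h
    rcases my_le_or_le hord h with h' | h'
    · exact ⟨_, mem_insert_self _ _, h'⟩
    · obtain ⟨i, hi, hle⟩ := ih h'
      exact ⟨i, mem_insert_of_mem hi, hle⟩

end Helpers


theorem exists_good_cocircuit {S : Type*} [Semifield S] [LinearOrder S]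
    (hord : ∀ a b : S, a ≤ b ↔ a + b = b)
    (n d : ℕ) (hd : 1 ≤ d) (w : Finset (Fin n) → S)
    (K : Finset (Fin n)) (hK : K.card = d) (hwK : w K ≠ 0)
    (v : Fin n → S)
    (hv : ∀ J : Finset (Fin n), J.card = d + 1 → ∀ j : Fin n,
      ∑ i ∈ J, w (J.erase i) * v i = ∑ i ∈ J.erase j, w (J.erase i) * v i)
    (j : Fin n) (hvj : v j ≠ 0) :
    ∃ I : Finset (Fin n), I.card = d - 1 ∧ j ∉ I ∧ w (insert j I) ≠ 0 ∧
      ∀ j', j' ∉ I → v j * w (insert j' I) ≤ v j' * w (insert j I) := by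
  classical
  set C : Finset (Finset (Fin n)) :=
    univ.filter (fun I => I.card = d - 1 ∧ j ∉ I ∧ w (insert j I) ≠ 0) with hC
  -- nonemptiness
  have hCne : C.Nonempty := by
    by_contra hne
    have hempty : ∀ I : Finset (Fin n),
        ¬ (I.card = d - 1 ∧ j ∉ I ∧ w (insert j I) ≠ 0) := by
      intro I hI
      exact hne ⟨I, by simp [hC, hI]⟩
    have hz : ∀ B : Finset (Fin n), B.card = d → j ∈ B → w B = 0 := by
      intro B hB hjB
      by_contra hwB
      refine hempty (B.erase j) ⟨?_, notMem_erase _ _, ?_⟩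
      · rw [card_erase_of_mem hjB, hB]
      · rw [insert_erase hjB]; exact hwB
    have hjK : j ∉ K := fun h => hwK (hz K hK h)
    have hcard : (insert j K).card = d + 1 := by
      rw [card_insert_of_notMem hjK, hK]
    have heq := hv (insert j K) hcard j
    rw [erase_insert hjK] at heq
    rw [Finset.sum_insert hjK, erase_insert hjK] at heq
    have hrest : ∀ i ∈ K, w ((insert j K).erase i) * v i = 0 := by
      intro i hi
      have hij : j ≠ i := fun h => hjK (h ▸ hi)
      have : (insert j K).erase i = insert j (K.erase i) :=
        erase_insert_of_ne hij
      rw [this, hz _ (by rw [card_insert_of_notMem (fun h => hjK (mem_of_mem_erase h)),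
        card_erase_of_mem hi, hK]; omega) (mem_insert_self _ _), zero_mul]
    rw [Finset.sum_congr rfl hrest] at heq
    simp only [Finset.sum_const_zero, add_zero] at heq
    exact hvj ((mul_eq_zero.1 heq).resolve_left hwK)
  -- the zero set and the key function
  set Z : Finset (Fin n) := univ.filter (fun i => v i = 0) with hZ
  have hZmem : ∀ i : Fin n, i ∈ Z ↔ v i = 0 := by intro i; simp [hZ]
  obtain ⟨I, hIC, hImax⟩ := C.exists_max_image
    (fun I => toLex ((I ∩ Z).card, w (insert j I) / ∏ i ∈ I \ Z, v i)) hCne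
  rw [hC, mem_filter] at hIC
  obtain ⟨-, hIcard, hjI, hwIj⟩ := hIC
  refine ⟨I, hIcard, hjI, hwIj, ?_⟩
  intro j' hj'I
  by_contra hle
  have hviol : v j' * w (insert j I) < v j * w (insert j' I) := not_le.1 hle
  have hjj' : j' ≠ j := by rintro rfl; exact lt_irrefl _ hviol
  have hapos : (0:S) < v j * w (insert j' I) :=
    lt_of_le_of_lt (my_zero_le hord _) hviol
  have hane : v j * w (insert j' I) ≠ 0 := hapos.ne'
  have hwIj' : w (insert j' I) ≠ 0 := fun h => hane (by rw [h, mul_zero])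
  -- kernel relation on J = insert j (insert j' I)
  have hjI2 : j ∉ insert j' I := by
    simp only [mem_insert]
    push_neg
    exact ⟨Ne.symm hjj', hjI⟩
  have hcardJ : (insert j (insert j' I)).card = d + 1 := by
    rw [card_insert_of_notMem hjI2, card_insert_of_notMem hj'I, hIcard]
    omega
  have heq := hv (insert j (insert j' I)) hcardJ j
  rw [erase_insert hjI2] at heq
  rw [Finset.sum_insert hjI2, erase_insert hjI2] at heq
  have hle2 : w (insert j' I) * v j ≤
      ∑ i ∈ insert j' I, w ((insert j (insert j' I)).erase i) * v i :=
    (hord _ _).2 heq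
  obtain ⟨t, htmem, hta⟩ := my_exists_le_of_le_sum hord
    (by rw [mul_comm] at hane; exact hane) hle2
  have htj' : t ≠ j' := by
    rintro rfl
    rw [erase_insert_of_ne (Ne.symm hjj'), erase_insert hj'I] at hta
    have h2 : v j * w (insert t I) ≤ v t * w (insert j I) := by
      rw [mul_comm (v j), mul_comm (v t)]; exact hta
    exact absurd (hviol.trans_le h2) (lt_irrefl _)
  have htI : t ∈ I := (mem_insert.1 htmem).resolve_left htj'
  have htj : t ≠ j := fun h => hjI (h ▸ htI)
  set I' : Finset (Fin n) := insert j' (I.erase t) with hI'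
  have hjI'2 : (insert j (insert j' I)).erase t = insert j I' := by
    rw [erase_insert_of_ne (Ne.symm htj), erase_insert_of_ne (Ne.symm htj')]
  rw [hjI'2] at hta
  -- hta : w (insert j' I) * v j ≤ w (insert j I') * v t
  have hbig : v j' * w (insert j I) < w (insert j I') * v t :=
    lt_of_lt_of_le (by rw [mul_comm (v j)] at hviol; exact hviol) hta
  have hfne : w (insert j I') * v t ≠ 0 :=
    (lt_of_le_of_lt (my_zero_le hord _) hbig).ne'
  have hwI'j : w (insert j I') ≠ 0 := fun h => hfne (by rw [h, zero_mul])
  have hvt : v t ≠ 0 := fun h => hfne (by rw [h, mul_zero])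
  have htZ : t ∉ Z := fun h => hvt ((hZmem t).1 h)
  -- I' is a candidate
  have hj'et : j' ∉ I.erase t := fun h => hj'I (mem_of_mem_erase h)
  have hjI' : j ∉ I' := by
    simp only [hI', mem_insert]
    push_neg
    exact ⟨Ne.symm hjj', fun h => hjI (mem_of_mem_erase h)⟩
  have hI'card : I'.card = d - 1 := by
    rw [hI', card_insert_of_notMem hj'et, card_erase_of_mem htI, hIcard]
    have : 1 ≤ I.card := card_pos.2 ⟨t, htI⟩
    omega
  have hI'C : I' ∈ C := by
    rw [hC, mem_filter]
    exact ⟨mem_univ _, hI'card, hjI', hwI'j⟩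
  have hmax := hImax I' hI'C
  rw [Prod.Lex.le_iff] at hmax
  -- intersection with Z
  have hinter : (I.erase t) ∩ Z = I ∩ Z := by
    rw [erase_inter]
    exact erase_eq_of_notMem (fun h => htZ (mem_of_mem_inter_right h))
  by_cases hj'Z : j' ∈ Z
  · -- primary key strictly increases : contradiction
    have : (I' ∩ Z).card = (I ∩ Z).card + 1 := by
      rw [hI', insert_inter_of_mem hj'Z, hinter,
        card_insert_of_notMem (fun h => hj'I (mem_of_mem_inter_left h))]
    rcases hmax with h1 | ⟨h1, -⟩ <;> simp only [this, ofLex_toLex] at h1 <;> omega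
  · -- primary equal, secondary must decrease
    have hvj' : v j' ≠ 0 := fun h => hj'Z ((hZmem j').2 h)
    have hcZ : (I' ∩ Z).card = (I ∩ Z).card := by
      rw [hI', insert_inter_of_notMem hj'Z, hinter]
    have hss : w (insert j I') / ∏ i ∈ I' \ Z, v i ≤
        w (insert j I) / ∏ i ∈ I \ Z, v i := by
      rcases hmax with h1 | ⟨-, h2⟩
      · simp only [hcZ, ofLex_toLex] at h1; omega
      · exact h2
    -- rewrite the products
    have hsdiff : I' \ Z = insert j' ((I \ Z).erase t) := by
      rw [hI', insert_sdiff_of_notMem _ hj'Z, erase_sdiff_comm]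
    have htIZ : t ∈ I \ Z := mem_sdiff.2 ⟨htI, htZ⟩
    have hj'IZ : j' ∉ (I \ Z).erase t := fun h =>
      hj'I (mem_sdiff.1 (mem_of_mem_erase h)).1
    set P : S := ∏ i ∈ (I \ Z).erase t, v i with hP
    have hPne : P ≠ 0 := by
      rw [hP, Finset.prod_ne_zero_iff]
      intro i hi h0
      exact (mem_sdiff.1 (mem_of_mem_erase hi)).2 ((hZmem i).2 h0)
    have hprodI' : ∏ i ∈ I' \ Z, v i = v j' * P := by
      rw [hsdiff, Finset.prod_insert hj'IZ]
    have hprodI : ∏ i ∈ I \ Z, v i = v t * P := by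
      rw [hP, Finset.mul_prod_erase _ _ htIZ]
    rw [hprodI', hprodI] at hss
    -- multiply by (v j' * P) * v t
    have hmul := my_mul_le_mul_right hord hss ((v j' * P) * v t)
    have hL : w (insert j I') / (v j' * P) * (v j' * P * v t) =
        w (insert j I') * v t := by
      rw [← mul_assoc, div_mul_cancel₀ _ (mul_ne_zero hvj' hPne)]
    have hR : w (insert j I) / (v t * P) * (v j' * P * v t) =
        w (insert j I) * v j' := by
      field_simp
    rw [hL, hR] at hmul
    rw [mul_comm (w (insert j I))] at hmul
    exact absurd (lt_of_lt_of_le hbig hmul) (lt_irrefl _)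


/-- The tropical Plücker relations for a rank-`d` tensor `w ∈ ⋀^d S^n`. -/
def TropPluckerRel {S : Type*} [Semifield S] (n d : ℕ) (w : Finset (Fin n) → S) : Prop :=
  ∀ A B : Finset (Fin n), A.card = d + 1 → B.card = d - 1 → ∀ p ∈ A \ B,
    ∑ i ∈ A \ B, w (A.erase i) * w (insert i B)
      = ∑ i ∈ (A \ B).erase p, w (A.erase i) * w (insert i B)

/-- over a totally ordered idempotent semifield, for a tropical Plücker
vector `w` with `w_K ≠ 0` (`x_K` generating `⋀^d Q_w ≅ S`), the map
`⋀^{d−1} Q_w → Q_w^∨ = L_w` sending `x_I` to `u_I = ∑_j (w_{I+j}/w_K) e_j` (with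
`u_I(j) = 0` for `j ∈ I`) is surjective: every `v ∈ L_w = tropker(−∧w)` is an
`S`-linear combination of the vectors `u_I`, `I ∈ C([n],d−1)`. -/
theorem wedge_to_Lw_surjective {S : Type*} [Semifield S] [LinearOrder S]
    (hid : ∀ s : S, s + s = s) (hord : ∀ a b : S, a ≤ b ↔ a + b = b)
    (n d : ℕ) (hd : 1 ≤ d) (w : Finset (Fin n) → S)
    (hpl : TropPluckerRel n d w)
    (K : Finset (Fin n)) (hK : K.card = d) (hwK : w K ≠ 0)
    (v : Fin n → S)
    (hv : ∀ J : Finset (Fin n), J.card = d + 1 → ∀ j : Fin n,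
      ∑ i ∈ J, w (J.erase i) * v i = ∑ i ∈ J.erase j, w (J.erase i) * v i) :
    ∃ m : {I : Finset (Fin n) // I.card = d - 1} → S,
      v = fun j => ∑ I : {I : Finset (Fin n) // I.card = d - 1},
        m I * (if j ∉ I.1 then w (insert j I.1) / w K else 0) := by
  classical
  set m : {I : Finset (Fin n) // I.card = d - 1} → S := fun I =>
    ∑ j ∈ univ.filter (fun j => j ∉ I.1 ∧ w (insert j I.1) ≠ 0 ∧
        ∀ j', j' ∉ I.1 → v j * w (insert j' I.1) ≤ v j' * w (insert j I.1)),
      v j * w K / w (insert j I.1) with hm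
  refine ⟨m, ?_⟩
  funext t
  apply le_antisymm
  · -- v t ≤ sum
    by_cases hvt : v t = 0
    · rw [hvt]; exact my_zero_le hord _
    · obtain ⟨I₀, hI₀card, htI₀, hwI₀, hGood₀⟩ :=
        exists_good_cocircuit hord n d hd w K hK hwK v hv t hvt
      set I₀' : {I : Finset (Fin n) // I.card = d - 1} := ⟨I₀, hI₀card⟩ with hI₀'
      have htmem : t ∈ univ.filter (fun j => j ∉ I₀'.1 ∧ w (insert j I₀'.1) ≠ 0 ∧
          ∀ j', j' ∉ I₀'.1 → v j * w (insert j' I₀'.1) ≤ v j' * w (insert j I₀'.1)) := by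
        rw [mem_filter]
        exact ⟨mem_univ _, htI₀, hwI₀, hGood₀⟩
      have h1 : v t * w K / w (insert t I₀) ≤ m I₀' := by
        have h0 := my_single_le_sum hid hord
          (f := fun j => v j * w K / w (insert j I₀'.1)) htmem
        simpa [hm] using h0
      have h2 := my_mul_le_mul_right hord h1 (w (insert t I₀) / w K)
      have hL : v t * w K / w (insert t I₀) * (w (insert t I₀) / w K) = v t := by
        field_simp
      rw [hL] at h2
      refine h2.trans ?_
      have h3 : m I₀' * (w (insert t I₀) / w K) =
          m I₀' * (if t ∉ I₀'.1 then w (insert t I₀'.1) / w K else 0) := by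
        rw [if_pos htI₀]
      rw [h3]
      exact my_single_le_sum hid hord
        (f := fun I => m I * (if t ∉ I.1 then w (insert t I.1) / w K else 0))
        (mem_univ I₀')
  · -- sum ≤ v t
    refine my_sum_le hord ?_
    intro I _
    by_cases htI : t ∈ I.1
    · rw [if_neg (by simpa using htI), mul_zero]
      exact my_zero_le hord _
    · rw [if_pos htI, hm, Finset.sum_mul]
      refine my_sum_le hord ?_
      intro jj hjj
      rw [mem_filter] at hjj
      obtain ⟨-, hjjI, hwjj, hGoodjj⟩ := hjj
      have hkey : v jj * w (insert t I.1) ≤ v t * w (insert jj I.1) := hGoodjj t htI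
      have h2 := my_mul_le_mul_right hord hkey (w (insert jj I.1))⁻¹
      rw [mul_inv_cancel_right₀ hwjj] at h2
      refine le_trans (le_of_eq ?_) h2
      field_simp
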